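/- arXiv:1401.4781 — 3 statements merged into one kernel-verified Lean document; each statement's English description precedes it below -/
import Mathlib

section
/- For real σ₀ with 1/2 < σ₀ < 1 and real T ≥ 2, one has ∑_{1 ≤ n < m < T} (n m)^(-σ₀) ≤ T^(2(1-σ₀))/(2(1-σ₀)²) − σ₀ T^(1-σ₀)/(1-σ₀)² + σ₀²/(2(1-σ₀)²) − ζ(2σ₀)/2 − T^(1-2σ₀)/(2(1-2σ₀)) + T^(-2σ₀)/2. -/
set_option maxHeartbeats 1000000

open Finset

/-- Square of a sum decomposed into off-diagonal (twice) plus diagonal. -/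
lemma aux_sq_sum_eq (s : Finset ℕ) (f : ℕ → ℝ) :
    (∑ i ∈ s, f i) ^ 2 =
      2 * (∑ m ∈ s, ∑ n ∈ s, if n < m then f n * f m else 0) + ∑ i ∈ s, f i ^ 2 := by
  have h1 : (∑ i ∈ s, f i) ^ 2 = ∑ m ∈ s, ∑ n ∈ s, f m * f n := by
    rw [sq, Finset.sum_mul_sum]
  have h2 : ∀ m n : ℕ, f m * f n =
      (if n < m then f n * f m else 0) + (if m < n then f n * f m else 0)
        + (if n = m then f n * f m else 0) := by
    intro m n
    rcases lt_trichotomy n m with h | h | h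
    · simp [h, h.ne, not_lt.2 h.le, mul_comm]
    · simp [h, mul_comm]
    · simp [h.ne', not_lt.2 h.le, h, mul_comm]
  have hswap : (∑ m ∈ s, ∑ n ∈ s, if m < n then f n * f m else 0)
      = ∑ m ∈ s, ∑ n ∈ s, if n < m then f n * f m else 0 := by
    rw [Finset.sum_comm]
    exact Finset.sum_congr rfl fun m _ => Finset.sum_congr rfl fun n _ => by
      by_cases h : n < m <;> simp [h, mul_comm]
  have hdiag : (∑ m ∈ s, ∑ n ∈ s, if n = m then f n * f m else 0) = ∑ i ∈ s, f i ^ 2 := by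
    refine Finset.sum_congr rfl fun m hm => ?_
    rw [Finset.sum_ite_eq' s m fun n => f n * f m]
    simp [hm, sq]
  calc (∑ i ∈ s, f i) ^ 2 = ∑ m ∈ s, ∑ n ∈ s, f m * f n := h1
    _ = ∑ m ∈ s, ∑ n ∈ s, ((if n < m then f n * f m else 0)
          + (if m < n then f n * f m else 0) + (if n = m then f n * f m else 0)) := by
        exact Finset.sum_congr rfl fun m _ => Finset.sum_congr rfl fun n _ => h2 m n
    _ = (∑ m ∈ s, ∑ n ∈ s, if n < m then f n * f m else 0)
          + (∑ m ∈ s, ∑ n ∈ s, if m < n then f n * f m else 0)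
          + (∑ m ∈ s, ∑ n ∈ s, if n = m then f n * f m else 0) := by
        simp [Finset.sum_add_distrib]
    _ = 2 * (∑ m ∈ s, ∑ n ∈ s, if n < m then f n * f m else 0) + ∑ i ∈ s, f i ^ 2 := by
        rw [hswap, hdiag]; ring

theorem double_sum_bound (σ₀ T : ℝ) (h₁ : 1 / 2 < σ₀) (h₂ : σ₀ < 1) (hT : 2 ≤ T) :
    ∑ m ∈ Finset.Ico 1 ⌈T⌉₊, ∑ n ∈ Finset.Ico 1 m, ((n : ℝ) * m) ^ (-σ₀)
      ≤ T ^ (2 * (1 - σ₀)) / (2 * (1 - σ₀) ^ 2)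
        - σ₀ * T ^ (1 - σ₀) / (1 - σ₀) ^ 2
        + σ₀ ^ 2 / (2 * (1 - σ₀) ^ 2)
        - (riemannZeta (2 * σ₀)).re / 2
        - T ^ (1 - 2 * σ₀) / (2 * (1 - 2 * σ₀))
        + T ^ (-(2 * σ₀)) / 2 := by
  set M := ⌈T⌉₊ with hM
  have hT0 : (0:ℝ) < T := by linarith
  have hMT : T ≤ (M:ℝ) := Nat.le_ceil T
  have hM2 : 2 ≤ M := by exact_mod_cast le_trans hT hMT
  have hM1T : (M:ℝ) - 1 ≤ T := by
    have := Nat.ceil_lt_add_one (le_of_lt hT0)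
    push_cast [hM] at this ⊢
    linarith
  have hσpos : (0:ℝ) < σ₀ := by linarith
  have h1σ : (0:ℝ) < 1 - σ₀ := by linarith
  have h2σ : (1:ℝ) < 2 * σ₀ := by linarith
  set f : ℕ → ℝ := fun n => (n:ℝ) ^ (-σ₀) with hf
  set S : ℝ := ∑ i ∈ Ico 1 M, f i with hS
  set Q : ℝ := ∑ i ∈ Ico 1 M, f i ^ 2 with hQ
  -- Step 1: rewrite the double sum
  have hLHS : ∑ m ∈ Ico 1 M, ∑ n ∈ Ico 1 m, ((n : ℝ) * m) ^ (-σ₀) = (S ^ 2 - Q) / 2 := by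
    have key : ∑ m ∈ Ico 1 M, ∑ n ∈ Ico 1 m, ((n : ℝ) * m) ^ (-σ₀)
        = ∑ m ∈ Ico 1 M, ∑ n ∈ Ico 1 M, if n < m then f n * f m else 0 := by
      refine Finset.sum_congr rfl fun m hm => ?_
      have hmM : m ≤ M := (Finset.mem_Ico.1 hm).2.le
      have hfilter : (Ico 1 M).filter (· < m) = Ico 1 m := by
        ext x; simp only [Finset.mem_filter, Finset.mem_Ico]; omega
      rw [← Finset.sum_filter, hfilter]
      refine Finset.sum_congr rfl fun n _ => ?_
      rw [Real.mul_rpow (Nat.cast_nonneg n) (Nat.cast_nonneg m)]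
    have := aux_sq_sum_eq (Ico 1 M) f
    rw [key]
    rw [← hS, ← hQ] at this
    linarith
  rw [hLHS]
  -- Step 2: upper bound S
  have hS0 : 0 ≤ S := Finset.sum_nonneg fun i _ => Real.rpow_nonneg (Nat.cast_nonneg i) _
  set B : ℝ := (T ^ (1 - σ₀) - σ₀) / (1 - σ₀) with hB
  have hSB : S ≤ B := by
    have h1M : 1 < M := by omega
    have hanti : AntitoneOn (fun x : ℝ => x ^ (-σ₀)) (Set.Icc ((1:ℕ):ℝ) ((M-1:ℕ):ℝ)) := by
      intro x hx y hy hxy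
      have hx0 : 0 < x := by
        have := hx.1; simp at this; linarith
      exact Real.rpow_le_rpow_of_nonpos hx0 hxy (by linarith)
    have hab : 1 ≤ M - 1 := by omega
    have hint := AntitoneOn.sum_le_integral_Ico hab hanti
    have hsum_eq : ∑ i ∈ Ico 1 (M-1), (fun x : ℝ => x ^ (-σ₀)) ((i+1 : ℕ) : ℝ)
        = ∑ i ∈ Ico 2 M, f i := by
      rw [Finset.sum_Ico_add' (fun x : ℕ => ((x:ℝ)) ^ (-σ₀)) 1 (M-1) 1]
      have : M - 1 + 1 = M := by omega
      rw [this]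
    have hcast : ((M-1:ℕ):ℝ) = (M:ℝ) - 1 := by
      push_cast [Nat.cast_sub (by omega : 1 ≤ M)]; ring
    have hintval : (∫ x in ((1:ℕ):ℝ)..((M-1:ℕ):ℝ), x ^ (-σ₀))
        = (((M:ℝ)-1) ^ (1 - σ₀) - 1) / (1 - σ₀) := by
      rw [integral_rpow (Or.inl (by linarith : (-1:ℝ) < -σ₀))]
      rw [hcast, Nat.cast_one, Real.one_rpow]
      have he : -σ₀ + 1 = 1 - σ₀ := by ring
      rw [he]
    have hmono : ((M:ℝ)-1) ^ (1 - σ₀) ≤ T ^ (1 - σ₀) :=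
      Real.rpow_le_rpow (by linarith) hM1T (by linarith)
    have hstep : ∑ i ∈ Ico 2 M, f i ≤ (T ^ (1 - σ₀) - 1) / (1 - σ₀) := by
      rw [← hsum_eq]
      refine hint.trans ?_
      rw [hintval]
      exact (div_le_div_iff_of_pos_right h1σ).2 (by linarith)
    have hsplit : S = f 1 + ∑ i ∈ Ico 2 M, f i := Finset.sum_eq_sum_Ico_succ_bot h1M f
    have hf1 : f 1 = 1 := by simp [hf]
    rw [hB]
    have hT1 : (1:ℝ) ≤ T ^ (1 - σ₀) := by
      calc (1:ℝ) = T ^ (0:ℝ) := by rw [Real.rpow_zero]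
      _ ≤ T ^ (1 - σ₀) := Real.rpow_le_rpow_of_exponent_le (by linarith) (by linarith)
    rw [hsplit, hf1]
    have hrw : (T ^ (1 - σ₀) - σ₀) / (1 - σ₀) = 1 + (T ^ (1 - σ₀) - 1) / (1 - σ₀) := by
      field_simp
      ring
    rw [hrw]
    linarith
  -- Step 3: lower bound Q via zeta
  have hQ2 : Q = ∑ i ∈ Ico 1 M, (i:ℝ) ^ (-(2*σ₀)) := by
    refine Finset.sum_congr rfl fun i hi => ?_
    have hi1 : 1 ≤ i := (Finset.mem_Ico.1 hi).1
    have hipos : (0:ℝ) < i := by exact_mod_cast hi1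
    rw [hf, sq, ← Real.rpow_add hipos]
    congr 1
    ring
  have hzeta : (riemannZeta (2 * σ₀)).re = ∑' n : ℕ, 1 / (n:ℝ) ^ (2*σ₀) := by
    have hre : (1:ℝ) < (2 * (σ₀:ℂ)).re := by
      simp [Complex.mul_re]; linarith
    rw [show ((2:ℂ) * (σ₀:ℂ)) = (2 * σ₀ : ℝ) by push_cast; ring] at hre ⊢
    rw [zeta_eq_tsum_one_div_nat_cpow (by rwa [Complex.ofReal_re])]
    have hterm : ∀ n : ℕ, 1 / (n:ℂ) ^ ((2*σ₀ : ℝ):ℂ) = ((1 / (n:ℝ) ^ (2*σ₀) : ℝ) : ℂ) := by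
      intro n
      rw [← Complex.ofReal_natCast, ← Complex.ofReal_cpow (Nat.cast_nonneg n)]
      push_cast
      ring
    rw [tsum_congr hterm, ← Complex.ofReal_tsum, Complex.ofReal_re]
  have hsummable : Summable (fun n : ℕ => 1 / (n:ℝ) ^ (2*σ₀)) :=
    Real.summable_one_div_nat_rpow.2 h2σ
  have hsplitz := Summable.sum_add_tsum_nat_add M hsummable
  have hrange : ∑ i ∈ range M, 1 / (i:ℝ) ^ (2*σ₀) = Q := by
    rw [Finset.range_eq_Ico, Finset.sum_eq_sum_Ico_succ_bot (by omega : 0 < M)]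
    rw [hQ2]
    have h0 : 1 / ((0:ℕ):ℝ) ^ (2*σ₀) = 0 := by
      rw [Nat.cast_zero, Real.zero_rpow (by linarith : 2*σ₀ ≠ 0)]; simp
    rw [h0, zero_add]
    refine Finset.sum_congr rfl fun i hi => ?_
    rw [Real.rpow_neg (Nat.cast_nonneg i), one_div]
  -- tail bound
  have htail : ∑' i : ℕ, 1 / ((i + M : ℕ):ℝ) ^ (2*σ₀)
      ≤ (M:ℝ) ^ (-(2*σ₀)) + (M:ℝ) ^ (1 - 2*σ₀) / (2*σ₀ - 1) := by
    have hsum' : Summable (fun i : ℕ => 1 / ((i + M : ℕ):ℝ) ^ (2*σ₀)) :=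
      (summable_nat_add_iff (f := fun n : ℕ => 1 / (n:ℝ) ^ (2*σ₀)) M).2 hsummable
    have hMpos : (0:ℝ) < M := by linarith
    have hRHS0 : 0 ≤ (M:ℝ) ^ (-(2*σ₀)) + (M:ℝ) ^ (1 - 2*σ₀) / (2*σ₀ - 1) :=
      add_nonneg (Real.rpow_nonneg hMpos.le _)
        (div_nonneg (Real.rpow_nonneg hMpos.le _) (by linarith))
    have key : ∀ N : ℕ, ∑ i ∈ range N, 1 / ((i + M : ℕ):ℝ) ^ (2*σ₀)
        ≤ (M:ℝ) ^ (-(2*σ₀)) + (M:ℝ) ^ (1 - 2*σ₀) / (2*σ₀ - 1) := by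
      intro N
      cases N with
      | zero => simpa using hRHS0
      | succ K =>
        rw [Finset.sum_range_succ']
        have h0term : 1 / ((0 + M : ℕ):ℝ) ^ (2*σ₀) = (M:ℝ) ^ (-(2*σ₀)) := by
          rw [Real.rpow_neg hMpos.le, one_div]
          norm_num
        rw [h0term]
        have hanti : AntitoneOn (fun x : ℝ => x ^ (-(2*σ₀)))
            (Set.Icc ((M:ℝ)) ((M:ℝ) + K)) := by
          intro x hx y hy hxy
          have hx0 : 0 < x := lt_of_lt_of_le hMpos hx.1
          exact Real.rpow_le_rpow_of_nonpos hx0 hxy (by linarith)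
        have hint := AntitoneOn.sum_le_integral (x₀ := (M:ℝ)) (a := K) hanti
        have hsum_eq : ∑ i ∈ range K, 1 / ((i + 1 + M : ℕ):ℝ) ^ (2*σ₀)
            = ∑ i ∈ range K, (fun x : ℝ => x ^ (-(2*σ₀))) ((M:ℝ) + ((i+1 : ℕ):ℝ)) := by
          refine Finset.sum_congr rfl fun i _ => ?_
          simp only
          rw [Real.rpow_neg (by positivity), one_div]
          congr 2
          push_cast
          ring
        have hintval : (∫ x in (M:ℝ)..((M:ℝ) + K), x ^ (-(2*σ₀)))
            ≤ (M:ℝ) ^ (1 - 2*σ₀) / (2*σ₀ - 1) := by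
          have hKnn : (0:ℝ) ≤ K := Nat.cast_nonneg K
          have hnotin : (0:ℝ) ∉ Set.uIcc (M:ℝ) ((M:ℝ) + K) := by
            rw [Set.uIcc_of_le (by linarith)]
            intro h
            have := h.1
            linarith
          rw [integral_rpow (Or.inr ⟨by intro h; rw [neg_eq_iff_eq_neg] at h; linarith [h], hnotin⟩)]
          have he : -(2*σ₀) + 1 = 1 - 2*σ₀ := by ring
          rw [he]
          have hMK : (0:ℝ) ≤ ((M:ℝ) + K) ^ (1 - 2*σ₀) := Real.rpow_nonneg (by linarith) _
          have hd : (0:ℝ) < 2*σ₀ - 1 := by linarith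
          have heq : (((M:ℝ) + K) ^ (1 - 2*σ₀) - (M:ℝ) ^ (1 - 2*σ₀)) / (1 - 2*σ₀)
              = ((M:ℝ) ^ (1 - 2*σ₀) - ((M:ℝ) + K) ^ (1 - 2*σ₀)) / (2*σ₀ - 1) := by
            rw [div_eq_div_iff (by linarith) (by linarith)]
            ring
          rw [heq]
          exact (div_le_div_iff_of_pos_right hd).2 (by linarith)
        calc ∑ i ∈ range K, 1 / ((i + 1 + M : ℕ):ℝ) ^ (2*σ₀) + (M:ℝ) ^ (-(2*σ₀))
            ≤ (∫ x in (M:ℝ)..((M:ℝ) + K), x ^ (-(2*σ₀))) + (M:ℝ) ^ (-(2*σ₀)) := by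
              rw [hsum_eq]
              exact add_le_add hint le_rfl
          _ ≤ (M:ℝ) ^ (-(2*σ₀)) + (M:ℝ) ^ (1 - 2*σ₀) / (2*σ₀ - 1) := by linarith
    refine Summable.tsum_le_of_sum_le hsum' fun s => ?_
    obtain ⟨N, hN⟩ := s.exists_nat_subset_range
    calc ∑ i ∈ s, 1 / ((i + M : ℕ):ℝ) ^ (2*σ₀)
        ≤ ∑ i ∈ range N, 1 / ((i + M : ℕ):ℝ) ^ (2*σ₀) :=
          Finset.sum_le_sum_of_subset_of_nonneg hN fun i _ _ => by positivity
      _ ≤ _ := key N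
  -- convert tail bound from M to T
  have htailT : ∑' i : ℕ, 1 / ((i + M : ℕ):ℝ) ^ (2*σ₀)
      ≤ T ^ (-(2*σ₀)) + T ^ (1 - 2*σ₀) / (2*σ₀ - 1) := by
    refine htail.trans ?_
    have h1 : (M:ℝ) ^ (-(2*σ₀)) ≤ T ^ (-(2*σ₀)) :=
      Real.rpow_le_rpow_of_nonpos hT0 hMT (by linarith)
    have h2 : (M:ℝ) ^ (1 - 2*σ₀) ≤ T ^ (1 - 2*σ₀) :=
      Real.rpow_le_rpow_of_nonpos hT0 hMT (by linarith)
    have h3 : (M:ℝ) ^ (1 - 2*σ₀) / (2*σ₀ - 1) ≤ T ^ (1 - 2*σ₀) / (2*σ₀ - 1) :=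
      (div_le_div_iff_of_pos_right (by linarith : (0:ℝ) < 2*σ₀ - 1)).2 h2
    linarith
  have hQlow : (riemannZeta (2 * σ₀)).re - T ^ (-(2*σ₀)) - T ^ (1 - 2*σ₀) / (2*σ₀ - 1) ≤ Q := by
    rw [hzeta]
    rw [← hsplitz, hrange]
    linarith
  -- Step 4: combine
  have hSB2 : S ^ 2 ≤ B ^ 2 := by
    have hB0 : 0 ≤ B := hS0.trans hSB
    nlinarith
  have hA2 : T ^ (2 * (1 - σ₀)) = (T ^ (1 - σ₀)) ^ 2 := by
    rw [show 2 * (1 - σ₀) = (1 - σ₀) + (1 - σ₀) by ring, Real.rpow_add hT0, sq]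
  set Z : ℝ := (riemannZeta (2 * σ₀)).re
  set A : ℝ := T ^ (1 - σ₀)
  set u : ℝ := T ^ (1 - 2*σ₀)
  set v : ℝ := T ^ (-(2*σ₀))
  have hgoal : (B ^ 2 - (Z - v - u / (2*σ₀ - 1))) / 2
      = T ^ (2 * (1 - σ₀)) / (2 * (1 - σ₀) ^ 2) - σ₀ * A / (1 - σ₀) ^ 2
        + σ₀ ^ 2 / (2 * (1 - σ₀) ^ 2) - Z / 2 - u / (2 * (1 - 2 * σ₀)) + v / 2 := by
    rw [hA2, hB]
    have hne1 : (1:ℝ) - σ₀ ≠ 0 := by linarith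
    have hne2 : (2:ℝ)*σ₀ - 1 ≠ 0 := by linarith
    have hne3 : (1:ℝ) - 2*σ₀ ≠ 0 := by linarith
    field_simp
    rw [show (1:ℝ) - σ₀ * 2 = -(σ₀ * 2 - 1) by ring, div_neg]
    ring
  calc (S ^ 2 - Q) / 2 ≤ (B ^ 2 - (Z - v - u / (2*σ₀ - 1))) / 2 := by
        have : Z - v - u / (2*σ₀ - 1) ≤ Q := hQlow
        linarith
    _ = _ := by rw [hgoal]
end

section
/- For real σ₀ with 1/2 < σ₀ < 1 and real T ≥ 2, one has ∑_{1 ≤ n < m < T} m^(1-2σ₀)/(m − n) ≤ (log T) T^(2(1-σ₀))/(2(1-σ₀)) + T^(2(1-σ₀))/(2(1-σ₀)) + log T + 1 − 1/(2(1-σ₀)) − (log T)/(2(1-σ₀)). -/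
lemma inner_sum_eq (m : ℕ) :
    ∑ n ∈ Finset.Ico 1 m, (1 : ℝ) / ((m : ℝ) - n) = (harmonic (m - 1) : ℝ) := by
  rw [harmonic, Rat.cast_sum]
  push_cast
  apply Finset.sum_nbij' (fun n => m - n - 1) (fun k => m - k - 1)
  · intro n hn; simp only [Finset.mem_Ico] at hn ⊢; simp only [Finset.mem_range]; omega
  · intro k hk; simp only [Finset.mem_range] at hk; simp only [Finset.mem_Ico]; omega
  · intro n hn; simp only [Finset.mem_Ico] at hn; omega
  · intro k hk; simp only [Finset.mem_range] at hk; omega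
  · intro n hn
    simp only [Finset.mem_Ico] at hn
    have h : m - n - 1 + 1 = m - n := by omega
    have h2 : ((m - n - 1 : ℕ) : ℝ) + 1 = ((m - n : ℕ) : ℝ) := by
      rw [← h]; push_cast; ring
    rw [one_div, h2, Nat.cast_sub (le_of_lt hn.2)]

theorem off_diagonal_sum_bound (σ₀ T : ℝ) (h₁ : 1 / 2 < σ₀) (h₂ : σ₀ < 1) (hT : 2 ≤ T) :
    ∑ m ∈ Finset.Ico 1 ⌈T⌉₊, ∑ n ∈ Finset.Ico 1 m, (m : ℝ) ^ (1 - 2 * σ₀) / ((m : ℝ) - n)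
      ≤ Real.log T * T ^ (2 * (1 - σ₀)) / (2 * (1 - σ₀))
        + T ^ (2 * (1 - σ₀)) / (2 * (1 - σ₀))
        + Real.log T + 1 - 1 / (2 * (1 - σ₀)) - Real.log T / (2 * (1 - σ₀)) := by
  set a : ℝ := 1 - 2 * σ₀ with ha
  set c : ℝ := 2 * (1 - σ₀) with hc
  have hac : a + 1 = c := by rw [ha, hc]; ring
  have ha0 : a < 0 := by rw [ha]; linarith
  have ha1 : -1 < a := by rw [ha]; linarith
  have hc0 : 0 < c := by rw [hc]; linarith
  set M := ⌈T⌉₊ with hM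
  have hT0 : (0:ℝ) < T := by linarith
  have hT1 : (1:ℝ) ≤ T := by linarith
  have hM2 : 2 ≤ M := by
    have := Nat.lt_ceil.mpr (show ((1:ℕ):ℝ) < T by push_cast; linarith)
    omega
  have hLT : 0 ≤ Real.log T := Real.log_nonneg hT1
  -- Step 1: bound by (1 + log T) * ∑ m^a
  have step1 : ∑ m ∈ Finset.Ico 1 M, ∑ n ∈ Finset.Ico 1 m, (m : ℝ) ^ a / ((m : ℝ) - n)
      ≤ (1 + Real.log T) * ∑ m ∈ Finset.Ico 1 M, (m : ℝ) ^ a := by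
    rw [Finset.mul_sum]
    apply Finset.sum_le_sum
    intro m hm
    simp only [Finset.mem_Ico] at hm
    have hm1 : 1 ≤ m := hm.1
    have hmT : (m : ℝ) < T := Nat.lt_ceil.mp hm.2
    have hrp : (0:ℝ) ≤ (m : ℝ) ^ a := Real.rpow_nonneg (Nat.cast_nonneg m) a
    have : ∑ n ∈ Finset.Ico 1 m, (m : ℝ) ^ a / ((m : ℝ) - n)
        = (m : ℝ) ^ a * ∑ n ∈ Finset.Ico 1 m, (1:ℝ) / ((m : ℝ) - n) := by
      rw [Finset.mul_sum]; apply Finset.sum_congr rfl; intro n _; ring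
    rw [this, inner_sum_eq, mul_comm ((1 + Real.log T))]
    apply mul_le_mul_of_nonneg_left _ hrp
    calc (harmonic (m-1) : ℝ) ≤ 1 + Real.log (m-1 : ℕ) := harmonic_le_one_add_log _
      _ ≤ 1 + Real.log T := by
        gcongr 1 + ?_
        rcases Nat.eq_zero_or_pos (m - 1) with h0 | h0
        · rw [h0]; simpa using hLT
        · apply Real.log_le_log (by exact_mod_cast h0)
          calc ((m-1:ℕ):ℝ) ≤ (m:ℝ) := by exact_mod_cast Nat.sub_le m 1
            _ ≤ T := le_of_lt hmT
  -- Step 2: ∑ m^a ≤ 1 + (T^c - 1)/c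
  have step2 : ∑ m ∈ Finset.Ico 1 M, (m : ℝ) ^ a ≤ 1 + (T ^ c - 1) / c := by
    rw [Finset.sum_eq_sum_Ico_succ_bot (by omega : 1 < M)]
    have h1 : ((1:ℕ):ℝ) ^ a = 1 := by norm_num
    rw [h1]
    gcongr 1 + ?_
    -- reindex Ico 2 M to Ico 1 (M-1)
    have hre : ∑ m ∈ Finset.Ico 2 M, ((m:ℕ) : ℝ) ^ a
        = ∑ i ∈ Finset.Ico 1 (M-1), ((i+1 : ℕ) : ℝ) ^ a := by
      apply Finset.sum_nbij' (fun m => m - 1) (fun i => i + 1)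
      · intro m hm; simp only [Finset.mem_Ico] at hm ⊢; omega
      · intro i hi; simp only [Finset.mem_Ico] at hi ⊢; omega
      · intro m hm; simp only [Finset.mem_Ico] at hm; omega
      · intro i hi; simp only [Finset.mem_Ico] at hi; omega
      · intro m hm; simp only [Finset.mem_Ico] at hm
        congr 2; omega
    rw [hre]
    have hanti : AntitoneOn (fun x : ℝ => x ^ a) (Set.Icc ((1:ℕ):ℝ) ((M-1:ℕ):ℝ)) := by
      intro x hx y hy hxy
      exact Real.rpow_le_rpow_of_nonpos (by simp at hx; linarith [hx.1]) hxy (le_of_lt ha0)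
    have hint := AntitoneOn.sum_le_integral_Ico (by omega : 1 ≤ M - 1) hanti
    refine hint.trans ?_
    rw [integral_rpow (Or.inl ha1)]
    have hMT : ((M-1:ℕ):ℝ) ≤ T := by
      have := Nat.lt_ceil.mp (show M - 1 < ⌈T⌉₊ by omega)
      linarith
    rw [hac]
    have : ((1:ℕ):ℝ) ^ c = 1 := by norm_num
    rw [this]
    gcongr
  -- Step 3: algebra
  calc ∑ m ∈ Finset.Ico 1 M, ∑ n ∈ Finset.Ico 1 m, (m : ℝ) ^ a / ((m : ℝ) - n)
      ≤ (1 + Real.log T) * ∑ m ∈ Finset.Ico 1 M, (m : ℝ) ^ a := step1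
    _ ≤ (1 + Real.log T) * (1 + (T ^ c - 1) / c) := by
        apply mul_le_mul_of_nonneg_left step2 (by linarith)
    _ = Real.log T * T ^ c / c + T ^ c / c + Real.log T + 1 - 1 / c - Real.log T / c := by
        field_simp
        ring
end

section
/- The function σ₀ ↦ (1 − 3σ₀ + 3σ₀²)/(2(1−σ₀)²) − ζ(2σ₀)/2 on (1/2, 1) changes sign exactly once, and in particular it is negative for σ₀ ∈ (0.52, 0.67) and positive for σ₀ ∈ (0.68, 0.97). -/
open Real Finset

noncomputable def zr (s : ℝ) : ℝ := ∑' n : ℕ, 1 / (n : ℝ) ^ s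

lemma zr_summable {s : ℝ} (hs : 1 < s) : Summable (fun n : ℕ => 1 / (n : ℝ) ^ s) :=
  Real.summable_one_div_nat_rpow.mpr hs

lemma zeta_re_eq {s : ℝ} (hs : 1 < s) : (riemannZeta (s : ℂ)).re = zr s := by
  have h := zeta_eq_tsum_one_div_nat_cpow (s := (s : ℂ)) (by rwa [Complex.ofReal_re])
  have h2 : (riemannZeta (s : ℂ)) = ((zr s : ℝ) : ℂ) := by
    rw [h, zr, Complex.ofReal_tsum]
    congr 1
    ext n
    push_cast
    rw [Complex.ofReal_cpow (Nat.cast_nonneg n) s]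
    norm_cast
  rw [h2, Complex.ofReal_re]

lemma zr_anti {s t : ℝ} (hs : 1 < s) (hst : s < t) : zr t < zr s := by
  have ht : 1 < t := hs.trans hst
  apply Summable.tsum_lt_tsum (i := 2) _ _ (zr_summable ht) (zr_summable hs)
  · intro n
    rcases Nat.eq_zero_or_pos n with rfl | hn
    · simp [Real.zero_rpow (by linarith : s ≠ 0), Real.zero_rpow (by linarith : t ≠ 0)]
    · have h1 : (1 : ℝ) ≤ (n : ℝ) := by exact_mod_cast hn
      have := Real.rpow_le_rpow_of_exponent_le h1 hst.le
      have hp : (0 : ℝ) < (n : ℝ) ^ s := Real.rpow_pos_of_pos (by linarith) s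
      exact one_div_le_one_div_of_le hp this
  · have h2 : ((2 : ℕ) : ℝ) ^ s < ((2 : ℕ) : ℝ) ^ t :=
      Real.rpow_lt_rpow_of_exponent_lt (by norm_num) hst
    have hp : (0 : ℝ) < ((2 : ℕ) : ℝ) ^ s := Real.rpow_pos_of_pos (by norm_num) s
    exact one_div_lt_one_div_of_lt hp h2

-- x^(-p) ≤ q  given  1 ≤ q^v * x^u  with  p * v = u
lemma rpow_neg_le {x q p : ℝ} {v u : ℕ} (hx : 0 < x) (hq : 0 ≤ q) (hv : v ≠ 0)
    (hpv : p * v = u) (h : 1 ≤ q ^ v * x ^ u) : x ^ (-p) ≤ q := by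
  have hxp : (0 : ℝ) < x ^ p := Real.rpow_pos_of_pos hx p
  have key : 1 ≤ q * x ^ p := by
    by_contra hlt
    push_neg at hlt
    have h0 : 0 ≤ q * x ^ p := mul_nonneg hq hxp.le
    have : (q * x ^ p) ^ v < 1 := pow_lt_one₀ h0 hlt hv
    rw [mul_pow, ← Real.rpow_natCast (x ^ p) v, ← Real.rpow_mul hx.le, hpv,
      Real.rpow_natCast] at this
    linarith
  rw [Real.rpow_neg hx.le]
  rw [inv_le_iff_one_le_mul₀ hxp]
  linarith [key]

-- q ≤ x^(-p)  given  q^v * x^u ≤ 1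
lemma le_rpow_neg {x q p : ℝ} {v u : ℕ} (hx : 0 < x) (hq : 0 ≤ q) (hv : v ≠ 0)
    (hpv : p * v = u) (h : q ^ v * x ^ u ≤ 1) : q ≤ x ^ (-p) := by
  have hxp : (0 : ℝ) < x ^ p := Real.rpow_pos_of_pos hx p
  have key : q * x ^ p ≤ 1 := by
    by_contra hlt
    push_neg at hlt
    have : 1 < (q * x ^ p) ^ v := one_lt_pow₀ hlt hv
    rw [mul_pow, ← Real.rpow_natCast (x ^ p) v, ← Real.rpow_mul hx.le, hpv,
      Real.rpow_natCast] at this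
    linarith
  rw [Real.rpow_neg hx.le]
  rw [← one_div, le_div_iff₀ hxp]
  linarith [key]

lemma tele_lower {x r : ℝ} (hx : 1 ≤ x) (hr0 : 0 < r) (hr1 : r ≤ 1) :
    x ^ (-r) - (x + 1) ^ (-r) ≤ r * (1 / x ^ (1 + r)) := by
  have hx0 : (0:ℝ) < x := by linarith
  set u : ℝ := 1 / x with hu
  have hu0 : 0 < u := by positivity
  have hu1 : u ≤ 1 := by rw [hu, div_le_one hx0]; linarith
  have hxu : x * (1 + u) = x + 1 := by rw [hu]; field_simp
  have hA_le : (1 + u) ^ r ≤ 1 + r * u :=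
    rpow_one_add_le_one_add_mul_self (by linarith) hr0.le hr1
  have hA_ge : 1 ≤ (1 + u) ^ r := Real.one_le_rpow (by linarith) hr0.le
  have hA0 : 0 < (1 + u) ^ r := Real.rpow_pos_of_pos (by linarith) r
  have hsplit : (x + 1) ^ (-r) = x ^ (-r) * ((1 + u) ^ r)⁻¹ := by
    rw [← hxu, Real.mul_rpow hx0.le (by linarith), Real.rpow_neg (by linarith : (0:ℝ) ≤ 1 + u)]
  have hxr0 : 0 < x ^ (-r) := Real.rpow_pos_of_pos hx0 _
  have hpow : 1 / x ^ (1 + r) = u * x ^ (-r) := by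
    rw [one_div, ← Real.rpow_neg hx0.le, show -(1 + r) = (-1) + (-r) by ring,
      Real.rpow_add hx0, Real.rpow_neg_one, hu, one_div]
  rw [hsplit, hpow]
  have hB1 : ((1 + u) ^ r)⁻¹ ≤ 1 := inv_le_one_of_one_le₀ hA_ge
  have h1B : 1 - ((1 + u) ^ r)⁻¹ ≤ r * u := by
    have heq : 1 - ((1 + u) ^ r)⁻¹ = ((1 + u) ^ r)⁻¹ * ((1 + u) ^ r - 1) := by
      field_simp
    rw [heq]
    calc ((1 + u) ^ r)⁻¹ * ((1 + u) ^ r - 1) ≤ 1 * (r * u) := by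
          apply mul_le_mul hB1 (by linarith) (by linarith) zero_le_one
      _ = r * u := one_mul _
  nlinarith [mul_le_mul_of_nonneg_left h1B hxr0.le]

lemma tele_upper {x r : ℝ} (hx : 1 ≤ x) (hr0 : 0 < r) (hr1 : r ≤ 1) :
    r * (1 / (x + 1) ^ (1 + r)) ≤ x ^ (-r) - (x + 1) ^ (-r) := by
  have hx0 : (0:ℝ) < x := by linarith
  have hy0 : (0:ℝ) < x + 1 := by linarith
  set v : ℝ := 1 / (x + 1) with hv
  have hv0 : 0 < v := by positivity
  have hv1 : v ≤ 1 / 2 := by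
    rw [hv, div_le_div_iff₀ hy0 (by norm_num)]; linarith
  have hyv : (x + 1) * (1 - v) = x := by rw [hv]; field_simp; ring
  have hC_le : (1 - v) ^ r ≤ 1 - r * v := by
    have := rpow_one_add_le_one_add_mul_self (s := -v) (by linarith) hr0.le hr1
    rw [show (1 : ℝ) + -v = 1 - v by ring] at this
    linarith [this]
  have hC0 : 0 < (1 - v) ^ r := Real.rpow_pos_of_pos (by linarith) r
  have hsplit : x ^ (-r) = (x + 1) ^ (-r) * ((1 - v) ^ r)⁻¹ := by
    conv_lhs => rw [← hyv]
    rw [Real.mul_rpow hy0.le (by linarith), Real.rpow_neg (by linarith : (0:ℝ) ≤ 1 - v)]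
  have hyr0 : 0 < (x + 1) ^ (-r) := Real.rpow_pos_of_pos hy0 _
  have hpow : 1 / (x + 1) ^ (1 + r) = v * (x + 1) ^ (-r) := by
    rw [one_div, ← Real.rpow_neg hy0.le, show -(1 + r) = (-1) + (-r) by ring,
      Real.rpow_add hy0, Real.rpow_neg_one, hv, one_div]
  rw [hsplit, hpow]
  have hrv : r * v ≤ 1 / 2 := by nlinarith
  have h1C : 1 + r * v ≤ ((1 - v) ^ r)⁻¹ := by
    have hprod : (1 + r * v) * ((1 - v) ^ r) ≤ 1 := by
      nlinarith [mul_pos hr0 hv0, hC_le, hC0.le]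
    rw [← one_div, le_div_iff₀ hC0]
    linarith
  nlinarith [mul_le_mul_of_nonneg_left h1C hyr0.le]

lemma zr_lb : (3367 / 1089 : ℝ) < zr 1.34 := by
  have h134 : (1:ℝ) < 1.34 := by norm_num
  have hsum := zr_summable h134
  set f : ℕ → ℝ := fun n => 1 / (n : ℝ) ^ (1.34 : ℝ) with hf
  have hs1 : ∑ n ∈ range 10002, f n ≤ zr 1.34 :=
    hsum.sum_le_tsum _ (fun i _ => by positivity)
  have hsplit : ∑ n ∈ range 10002, f n
      = (∑ i ∈ range 10000, f (i + 2)) + f 1 + f 0 := by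
    rw [Finset.sum_range_succ' f 10001, Finset.sum_range_succ' (fun i => f (i + 1)) 10000]
  have hf0 : f 0 = 0 := by
    simp [hf, Real.zero_rpow (by norm_num : (1.34:ℝ) ≠ 0)]
  have hf1 : f 1 = 1 := by simp [hf]
  set g : ℕ → ℝ := fun i => ((i : ℝ) + 2) ^ (-(0.34 : ℝ)) with hg
  have key : ∀ i : ℕ, g i - g (i + 1) ≤ 0.34 * f (i + 2) := by
    intro i
    have h := tele_lower (x := (i : ℝ) + 2) (r := 0.34)
      (by have : (0:ℝ) ≤ (i:ℝ) := Nat.cast_nonneg i; linarith) (by norm_num) (by norm_num)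
    have e1 : ((i : ℝ) + 2) + 1 = ((i + 1 : ℕ) : ℝ) + 2 := by push_cast; ring
    have e2 : (1 : ℝ) + 0.34 = 1.34 := by norm_num
    have e3 : (((i + 2 : ℕ)) : ℝ) = (i : ℝ) + 2 := by push_cast; ring
    rw [e1, e2] at h
    simpa [hg, hf, e3] using h
  have htel : ∑ i ∈ range 10000, (g i - g (i + 1)) = g 0 - g 10000 :=
    Finset.sum_range_sub' g 10000
  have hsum2 : g 0 - g 10000 ≤ 0.34 * ∑ i ∈ range 10000, f (i + 2) := by
    rw [← htel, Finset.mul_sum]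
    exact Finset.sum_le_sum fun i _ => key i
  have hg0 : (0.789 : ℝ) ≤ g 0 := by
    have : ((0:ℕ) : ℝ) + 2 = 2 := by norm_num
    rw [hg]
    simp only [this]
    exact le_rpow_neg (v := 50) (u := 17) (by norm_num) (by norm_num) (by norm_num)
      (by norm_num) (by norm_num)
  have hg10000 : g 10000 ≤ 0.044 := by
    have : ((10000:ℕ) : ℝ) + 2 = 10002 := by norm_num
    rw [hg]
    simp only [this]
    exact rpow_neg_le (v := 50) (u := 17) (by norm_num) (by norm_num) (by norm_num)
      (by norm_num) (by norm_num)
  have hS : (0.745 : ℝ) / 0.34 ≤ ∑ i ∈ range 10000, f (i + 2) := by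
    rw [div_le_iff₀ (by norm_num : (0:ℝ) < 0.34)]
    nlinarith [hsum2, hg0, hg10000]
  have : (1 : ℝ) + 0.745 / 0.34 ≤ zr 1.34 := by
    rw [hsplit, hf0, hf1] at hs1
    linarith
  nlinarith [this]

lemma head_bound (n a b : ℕ) (hn : 0 < n) (hb : 0 < b) (h : b ^ 25 ≤ a ^ 25 * n ^ 34) :
    1 / ((n : ℕ) : ℝ) ^ (1.36 : ℝ) ≤ (a : ℝ) / b := by
  have hn0 : (0:ℝ) < (n : ℝ) := by exact_mod_cast hn
  have hb0 : (0:ℝ) < (b : ℝ) := by exact_mod_cast hb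
  have key : ((n : ℝ)) ^ (-(1.36:ℝ)) ≤ (a : ℝ) / b := by
    apply rpow_neg_le (v := 25) (u := 34) hn0 (by positivity) (by norm_num) (by norm_num)
    rw [div_pow, div_mul_eq_mul_div, le_div_iff₀ (by positivity), one_mul]
    exact_mod_cast h
  rwa [Real.rpow_neg hn0.le, ← one_div] at key

lemma zr_ub : zr 1.36 < 3.3873 := by
  have h136 : (1:ℝ) < 1.36 := by norm_num
  have hsum := zr_summable h136
  set f : ℕ → ℝ := fun n => 1 / (n : ℝ) ^ (1.36 : ℝ) with hf
  have hsplit := hsum.sum_add_tsum_nat_add 26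
  -- tail bound
  set g : ℕ → ℝ := fun i => ((i : ℝ) + 25) ^ (-(0.36 : ℝ)) with hg
  have key : ∀ i : ℕ, f (i + 26) ≤ (1 / 0.36) * (g i - g (i + 1)) := by
    intro i
    have h := tele_upper (x := (i : ℝ) + 25) (r := 0.36)
      (by have : (0:ℝ) ≤ (i:ℝ) := Nat.cast_nonneg i; linarith) (by norm_num) (by norm_num)
    have e1 : ((i : ℝ) + 25) + 1 = ((i + 1 : ℕ) : ℝ) + 25 := by push_cast; ring
    have e2 : (1 : ℝ) + 0.36 = 1.36 := by norm_num
    have e3 : (((i + 26 : ℕ)) : ℝ) = ((i : ℝ) + 25) + 1 := by push_cast; ring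
    rw [e2] at h
    have h' : 0.36 * f (i + 26) ≤ g i - g (i + 1) := by
      simpa [hg, hf, e3, e1] using h
    linarith
  have htail : ∑' i, f (i + 26) ≤ (1 / 0.36) * (7847 / 25000 : ℝ) := by
    have htsum : Summable fun i => f (i + 26) := (summable_nat_add_iff 26).mpr hsum
    apply Summable.tsum_le_of_sum_le htsum
    intro u
    obtain ⟨M, hM⟩ := u.exists_nat_subset_range
    calc ∑ i ∈ u, f (i + 26) ≤ ∑ i ∈ range M, f (i + 26) :=
          Finset.sum_le_sum_of_subset_of_nonneg hM (fun i _ _ => by positivity)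
      _ ≤ ∑ i ∈ range M, (1 / 0.36) * (g i - g (i + 1)) :=
          Finset.sum_le_sum fun i _ => key i
      _ = (1 / 0.36) * (g 0 - g M) := by
          rw [← Finset.mul_sum, Finset.sum_range_sub' g M]
      _ ≤ (1 / 0.36) * (7847 / 25000 : ℝ) := by
          have hgM : 0 ≤ g M := by
            rw [hg]
            positivity
          have hg0 : g 0 ≤ 7847 / 25000 := by
            have e : ((0:ℕ) : ℝ) + 25 = 25 := by norm_num
            rw [hg]
            simp only [e]
            exact rpow_neg_le (v := 25) (u := 9) (by norm_num) (by norm_num) (by norm_num)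
              (by norm_num) (by norm_num)
          nlinarith
  -- head bound
  have hhead : ∑ n ∈ range 26, f n ≤ 62883 / 25000 := by
    have expand : ∑ n ∈ range 26, f n =
        f 0 + f 1 + f 2 + f 3 + f 4 + f 5 + f 6 + f 7 + f 8 + f 9 + f 10 + f 11 + f 12 + f 13 +
        f 14 + f 15 + f 16 + f 17 + f 18 + f 19 + f 20 + f 21 + f 22 + f 23 + f 24 + f 25 := by
      simp [Finset.sum_range_succ]
    rw [expand]
    have hf0 : f 0 = 0 := by
      simp [hf, Real.zero_rpow (by norm_num : (1.36:ℝ) ≠ 0)]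
    have b1 : f 1 ≤ (100001:ℝ)/100000 := by simpa [hf] using head_bound 1 100001 100000 (by norm_num) (by norm_num) (by norm_num)
    have b2 : f 2 ≤ (487:ℝ)/1250 := by simpa [hf] using head_bound 2 487 1250 (by norm_num) (by norm_num) (by norm_num)
    have b3 : f 3 ≤ (11223:ℝ)/50000 := by simpa [hf] using head_bound 3 11223 50000 (by norm_num) (by norm_num) (by norm_num)
    have b4 : f 4 ≤ (15179:ℝ)/100000 := by simpa [hf] using head_bound 4 15179 100000 (by norm_num) (by norm_num) (by norm_num)
    have b5 : f 5 ≤ (5603:ℝ)/50000 := by simpa [hf] using head_bound 5 5603 50000 (by norm_num) (by norm_num) (by norm_num)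
    have b6 : f 6 ≤ (4373:ℝ)/50000 := by simpa [hf] using head_bound 6 4373 50000 (by norm_num) (by norm_num) (by norm_num)
    have b7 : f 7 ≤ (1773:ℝ)/25000 := by simpa [hf] using head_bound 7 1773 25000 (by norm_num) (by norm_num) (by norm_num)
    have b8 : f 8 ≤ (2957:ℝ)/50000 := by simpa [hf] using head_bound 8 2957 50000 (by norm_num) (by norm_num) (by norm_num)
    have b9 : f 9 ≤ (5039:ℝ)/100000 := by simpa [hf] using head_bound 9 5039 100000 (by norm_num) (by norm_num) (by norm_num)
    have b10 : f 10 ≤ (4367:ℝ)/100000 := by simpa [hf] using head_bound 10 4367 100000 (by norm_num) (by norm_num) (by norm_num)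
    have b11 : f 11 ≤ (959:ℝ)/25000 := by simpa [hf] using head_bound 11 959 25000 (by norm_num) (by norm_num) (by norm_num)
    have b12 : f 12 ≤ (213:ℝ)/6250 := by simpa [hf] using head_bound 12 213 6250 (by norm_num) (by norm_num) (by norm_num)
    have b13 : f 13 ≤ (3057:ℝ)/100000 := by simpa [hf] using head_bound 13 3057 100000 (by norm_num) (by norm_num) (by norm_num)
    have b14 : f 14 ≤ (691:ℝ)/25000 := by simpa [hf] using head_bound 14 691 25000 (by norm_num) (by norm_num) (by norm_num)
    have b15 : f 15 ≤ (629:ℝ)/25000 := by simpa [hf] using head_bound 15 629 25000 (by norm_num) (by norm_num) (by norm_num)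
    have b16 : f 16 ≤ (461:ℝ)/20000 := by simpa [hf] using head_bound 16 461 20000 (by norm_num) (by norm_num) (by norm_num)
    have b17 : f 17 ≤ (2123:ℝ)/100000 := by simpa [hf] using head_bound 17 2123 100000 (by norm_num) (by norm_num) (by norm_num)
    have b18 : f 18 ≤ (491:ℝ)/25000 := by simpa [hf] using head_bound 18 491 25000 (by norm_num) (by norm_num) (by norm_num)
    have b19 : f 19 ≤ (73:ℝ)/4000 := by simpa [hf] using head_bound 19 73 4000 (by norm_num) (by norm_num) (by norm_num)
    have b20 : f 20 ≤ (851:ℝ)/50000 := by simpa [hf] using head_bound 20 851 50000 (by norm_num) (by norm_num) (by norm_num)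
    have b21 : f 21 ≤ (1593:ℝ)/100000 := by simpa [hf] using head_bound 21 1593 100000 (by norm_num) (by norm_num) (by norm_num)
    have b22 : f 22 ≤ (299:ℝ)/20000 := by simpa [hf] using head_bound 22 299 20000 (by norm_num) (by norm_num) (by norm_num)
    have b23 : f 23 ≤ (44:ℝ)/3125 := by simpa [hf] using head_bound 23 44 3125 (by norm_num) (by norm_num) (by norm_num)
    have b24 : f 24 ≤ (1329:ℝ)/100000 := by simpa [hf] using head_bound 24 1329 100000 (by norm_num) (by norm_num) (by norm_num)
    have b25 : f 25 ≤ (1257:ℝ)/100000 := by simpa [hf] using head_bound 25 1257 100000 (by norm_num) (by norm_num) (by norm_num)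
    rw [hf0]
    linarith
  have : zr 1.36 = ∑ n ∈ range 26, f n + ∑' i, f (i + 26) := by
    rw [hsplit]; rfl
  rw [this]
  have := htail
  nlinarith [hhead, htail]

noncomputable def F (x : ℝ) : ℝ :=
  (1 - 3 * x + 3 * x ^ 2) / (2 * (1 - x) ^ 2) - (riemannZeta ((2 * x : ℝ) : ℂ)).re / 2

lemma F_mono {a b : ℝ} (ha : 1 / 2 < a) (hab : a < b) (hb : b < 1) : F a < F b := by
  have hga : ((0:ℝ) < 2 * (1 - a) ^ 2) := by nlinarith
  have hgb : ((0:ℝ) < 2 * (1 - b) ^ 2) := by nlinarith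
  have hg : (1 - 3 * a + 3 * a ^ 2) / (2 * (1 - a) ^ 2)
      < (1 - 3 * b + 3 * b ^ 2) / (2 * (1 - b) ^ 2) := by
    rw [div_lt_div_iff₀ hga hgb]
    have hpos : 0 < (1 - a) + (1 - b) - 3 * ((1 - a) * (1 - b)) := by nlinarith
    nlinarith [mul_pos (sub_pos.2 hab) hpos]
  have hz : (riemannZeta ((2 * b : ℝ) : ℂ)).re < (riemannZeta ((2 * a : ℝ) : ℂ)).re := by
    rw [zeta_re_eq (by linarith), zeta_re_eq (by linarith)]
    exact zr_anti (by linarith) (by linarith)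
  unfold F
  linarith

lemma F_neg67 : F 0.67 < 0 := by
  unfold F
  have h : ((2 * 0.67 : ℝ) : ℂ) = ((1.34 : ℝ) : ℂ) := by norm_num
  rw [h, zeta_re_eq (by norm_num)]
  have := zr_lb
  have e : ((1:ℝ) - 3 * 0.67 + 3 * 0.67 ^ 2) / (2 * (1 - 0.67) ^ 2) = 3367 / 2178 := by
    norm_num
  rw [e]
  linarith

lemma F_pos68 : 0 < F 0.68 := by
  unfold F
  have h : ((2 * 0.68 : ℝ) : ℂ) = ((1.36 : ℝ) : ℂ) := by norm_num
  rw [h, zeta_re_eq (by norm_num)]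
  have := zr_ub
  have e : ((1:ℝ) - 3 * 0.68 + 3 * 0.68 ^ 2) / (2 * (1 - 0.68) ^ 2) = 0.3472 / 0.2048 := by
    norm_num
  rw [e]
  nlinarith [this]

theorem sign_change_E12 :
    (∃ c ∈ Set.Ioo (1 / 2 : ℝ) 1,
      (∀ x ∈ Set.Ioo (1 / 2 : ℝ) c,
          (1 - 3 * x + 3 * x ^ 2) / (2 * (1 - x) ^ 2) - (riemannZeta ((2 * x : ℝ) : ℂ)).re / 2 < 0) ∧
      (∀ x ∈ Set.Ioo c (1 : ℝ),
          0 < (1 - 3 * x + 3 * x ^ 2) / (2 * (1 - x) ^ 2) - (riemannZeta ((2 * x : ℝ) : ℂ)).re / 2)) ∧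
    (∀ x ∈ Set.Ioo (0.52 : ℝ) 0.67,
        (1 - 3 * x + 3 * x ^ 2) / (2 * (1 - x) ^ 2) - (riemannZeta ((2 * x : ℝ) : ℂ)).re / 2 < 0) ∧
    (∀ x ∈ Set.Ioo (0.68 : ℝ) 0.97,
        0 < (1 - 3 * x + 3 * x ^ 2) / (2 * (1 - x) ^ 2) - (riemannZeta ((2 * x : ℝ) : ℂ)).re / 2) := by
  have main : (∃ c ∈ Set.Ioo (1 / 2 : ℝ) 1,
      (∀ x ∈ Set.Ioo (1 / 2 : ℝ) c, F x < 0) ∧ (∀ x ∈ Set.Ioo c (1 : ℝ), 0 < F x)) ∧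
      (∀ x ∈ Set.Ioo (0.52 : ℝ) 0.67, F x < 0) ∧
      (∀ x ∈ Set.Ioo (0.68 : ℝ) 0.97, 0 < F x) := by
    set S : Set ℝ := {x | x ∈ Set.Ioo (1/2 : ℝ) 1 ∧ F x ≤ 0} with hS
    have h67 : (0.67 : ℝ) ∈ S := ⟨by constructor <;> norm_num, F_neg67.le⟩
    have hne : S.Nonempty := ⟨0.67, h67⟩
    have hub : ∀ y ∈ S, y ≤ 0.68 := by
      intro y hy
      by_contra hgt
      push_neg at hgt
      have : 0 < F y := lt_trans F_pos68 (F_mono (by norm_num) hgt hy.1.2)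
      linarith [hy.2]
    have hbdd : BddAbove S := ⟨0.68, hub⟩
    set c := sSup S with hc
    have hc67 : (0.67 : ℝ) ≤ c := le_csSup hbdd h67
    have hc68 : c ≤ 0.68 := csSup_le hne hub
    refine ⟨⟨c, ⟨by norm_num at hc67 ⊢; linarith, by linarith⟩, ?_, ?_⟩, ?_, ?_⟩
    · intro x hx
      obtain ⟨y, hyS, hxy⟩ := exists_lt_of_lt_csSup hne hx.2
      have : F x < F y := F_mono hx.1 hxy hyS.1.2
      linarith [hyS.2]
    · intro x hx
      by_contra hnp
      push_neg at hnp
      have hxS : x ∈ S := ⟨⟨by linarith [hx.1, hc67], hx.2⟩, hnp⟩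
      exact absurd (le_csSup hbdd hxS) (not_le.mpr hx.1)
    · intro x hx
      have : F x < F 0.67 := F_mono (by linarith [hx.1]) hx.2 (by norm_num)
      linarith [F_neg67]
    · intro x hx
      have : F 0.68 < F x := F_mono (by norm_num) hx.1 (by linarith [hx.2])
      linarith [F_pos68]
  exact main
end
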